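/- In the field ℚ(q) of rational functions in an indeterminate q, for integers b ≥ 0 and k ≥ 1: T_k(q^b, q) = Σ_{i=0}^{k−1} (q^{i(2k+1)} / (q; q)_b) · [b choose i]_{q^2} · Σ_{j=−(k−i)}^{k−i} (−q)^{j^2} + Σ_{i=0}^{b−1} ((q; q)_i / (q; q)_b) · q^{k(2k+2i+1)} · [b−i−1 choose k−1]_{q^2}. -/

import Mathlib

/-- The polynomials `T_k(t,q)` defined by `T_0 = 1` and, for `k ≥ 1`,
`T_k = T_{k-1} + (1+t)(-q)^{k²} + (1-t²) ∑_{i=1}^{k-1} (-q)^{k²-i²} T_{i-1}`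
(below the sum is reindexed by `i ↦ i+1`). -/
def T {R : Type*} [CommRing R] (t q : R) : ℕ → R
  | 0 => 1
  | (k+1) => T t q k + (1 + t) * (-q) ^ ((k+1)^2) +
      (1 - t^2) * ∑ i ∈ (Finset.range k).attach,
        (-q) ^ ((k+1)^2 - (i.1+1)^2) * T t q i.1
decreasing_by
  · exact Nat.lt_succ_self k
  · exact Nat.lt_succ_of_lt (Finset.mem_range.mp i.2)

/-- `f n h` with `f 0 0 = 1`, `f 0 h = 0` for `h ≥ 1`, `f n h = 0` for `h < 0`, and
`f n h = (1-q^h) f (n-1) (h-1) + (1-t q^{h+1}) f (n-1) (h+1)`; at `h = 0` the first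
term vanishes since `1 - q^0 = 0`. -/
def f {R : Type*} [CommRing R] (t q : R) : ℕ → ℕ → R
  | 0, h => if h = 0 then 1 else 0
  | (n+1), 0 => (1 - t * q) * f t q n 1
  | (n+1), (h+1) => (1 - q^(h+1)) * f t q n h + (1 - t * q^(h+2)) * f t q n (h+2)

/-- `Ẽ_n(t,q) = f(2n,0)`, which is `(1-q)^{2n}` times the `(t,q)`-Euler number. -/
def Etilde {R : Type*} [CommRing R] (t q : R) (n : ℕ) : R := f t q (2*n) 0

/-- Binomial coefficient with integer lower index, `0` when the lower index is negative. -/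
def binom (n : ℕ) (m : ℤ) : ℤ := if 0 ≤ m then (n.choose m.toNat : ℤ) else 0

/-- q-Pochhammer symbol `(a;q)_n = ∏_{j=0}^{n-1} (1 - a q^j)`. -/
def qPoch {K : Type*} [CommRing K] (a q : K) (n : ℕ) : K :=
  ∏ j ∈ Finset.range n, (1 - a * q ^ j)

/-- Gaussian binomial coefficient `[n choose k]_q = (q;q)_n / ((q;q)_k (q;q)_{n-k})`,
equal to `0` whenever `k < 0` or `k > n`. -/
def gauss {K : Type*} [Field K] (q : K) (n k : ℤ) : K :=
  if 0 ≤ k ∧ k ≤ n then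
    qPoch q q n.toNat / (qPoch q q k.toNat * qPoch q q (n - k).toNat)
  else 0

/-- Number of distinct (positive) part sizes of the partition encoded by an
antitone function `Fin m → Fin (n+1)`. -/
def distCard {m n : ℕ} (g : Fin m → Fin (n+1)) : ℕ :=
  ((Finset.univ.image fun i => ((g i : ℕ))).erase 0).card

/-- `∑_{λ ⊆ B(m,n)} x^{dist(λ)} q^{|λ|}`: partitions in the `m × n` box are encoded
as antitone functions `Fin m → Fin (n+1)`. -/
def boxSum {R : Type*} [CommRing R] (x q : R) (m n : ℕ) : R :=
  ∑ g ∈ Finset.univ.filter (fun g : Fin m → Fin (n+1) => ∀ i j : Fin m, i ≤ j → g j ≤ g i),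
    x ^ distCard g * q ^ (∑ i, (g i : ℕ))

/-- The indeterminate `q` in the field `ℚ(q)` of rational functions. -/
noncomputable def Xq : RatFunc ℚ := RatFunc.X


/-! ### Auxiliary development -/

noncomputable section Aux
open Finset

/-- `q^2`, the base of the Gaussian binomials appearing in the statement. -/
def QQ : RatFunc ℚ := Xq^2

/-- `(q;q)_n`. -/
def Pp (n : ℕ) : RatFunc ℚ := qPoch Xq Xq n

/-- `(q^2;q^2)_n`. -/
def Pq (n : ℕ) : RatFunc ℚ := qPoch QQ QQ n

/-- ℕ-indexed Gaussian binomial with base `q²`. -/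
def gN (n m : ℕ) : RatFunc ℚ := if m ≤ n then Pq n / (Pq m * Pq (n-m)) else 0

/-- `S_m = ∑_{j=-m}^m (-q)^{j²}`. -/
def Ss (m : ℕ) : RatFunc ℚ := ∑ j ∈ Finset.Icc (-(m:ℤ)) (m:ℤ), (-Xq) ^ ((j^2).toNat)

/-- `U b k`, with the fiat value `(q;q)_b` at `k = 0`. -/
def Uu (b k : ℕ) : RatFunc ℚ :=
  if k = 0 then Pp b else ∑ i ∈ range b, Pp i * Xq^(2*k*i) * gN (b-1-i) (k-1)

/-- `W b k = ∑_{i<k} (-1)^i q^{i(i-1)} [b+1 choose i]_{q²}`. -/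
def Ww (b k : ℕ) : RatFunc ℚ := ∑ i ∈ range k, (-1:RatFunc ℚ)^i * Xq^(i*i-i) * gN (b+1) i

/-- The master auxiliary quantity (`q^{k²}` times the `L`-function); vanishes for `k ≥ 2`. -/
def Ll (b k : ℕ) : RatFunc ℚ :=
  Xq^(k*k+4*k-1) * Uu b k - (1 - Xq^(2*k-1)) * Xq^(k*k) * Uu b (k-1)
  - Xq^(k*k-2*k+4+2*b) * Uu b (k-2) + Xq^(k*k) * gN (b+1) (k-1)
  + 2 * (-1:RatFunc ℚ)^k * Xq^(3*k-1) * Ww b k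

lemma hX : (Xq : RatFunc ℚ) ≠ 0 := RatFunc.X_ne_zero

lemma hXpow_ne_one (m : ℕ) (hm : 1 ≤ m) : (Xq : RatFunc ℚ)^m ≠ 1 := by
  intro h
  have h2 : (algebraMap (Polynomial ℚ) (RatFunc ℚ)) (Polynomial.X ^ m) =
      (algebraMap (Polynomial ℚ) (RatFunc ℚ)) 1 := by
    simpa [Xq, map_pow, map_one, RatFunc.algebraMap_X] using h
  have h3 : (Polynomial.X : Polynomial ℚ) ^ m = 1 :=
    RatFunc.algebraMap_injective ℚ h2
  have := congrArg (Polynomial.coeff · 0) h3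
  simp [Polynomial.coeff_X_pow] at this
  omega

lemma qPoch_succ {K : Type*} [CommRing K] (a q : K) (n : ℕ) :
    qPoch a q (n+1) = qPoch a q n * (1 - a * q^n) := Finset.prod_range_succ _ _

lemma Pp_ne (n : ℕ) : Pp n ≠ 0 := by
  unfold Pp qPoch
  refine Finset.prod_ne_zero_iff.mpr fun j _ => ?_
  have h := hXpow_ne_one (j+1) (by omega)
  intro hc
  apply h
  have : Xq * Xq ^ j = 1 := by linear_combination -hc
  rw [pow_succ, mul_comm]
  exact this

lemma Pq_ne (n : ℕ) : Pq n ≠ 0 := by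
  unfold Pq qPoch QQ
  refine Finset.prod_ne_zero_iff.mpr fun j _ => ?_
  have h := hXpow_ne_one (2+2*j) (by omega)
  intro hc
  apply h
  have : (Xq^2) * (Xq^2) ^ j = 1 := by linear_combination -hc
  calc Xq ^ (2+2*j) = Xq^2 * (Xq^2)^j := by rw [pow_add, pow_mul]
  _ = 1 := this

lemma Pp_succ (n : ℕ) : Pp (n+1) = Pp n * (1 - Xq^(n+1)) := by
  unfold Pp
  rw [qPoch_succ, pow_succ, mul_comm Xq]

lemma Pq_succ (n : ℕ) : Pq (n+1) = Pq n * (1 - QQ^(n+1)) := by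
  unfold Pq
  rw [qPoch_succ, pow_succ, mul_comm QQ]

lemma one_sub_QQ_pow_ne (j : ℕ) (hj : 1 ≤ j) : (1 - QQ^j) ≠ 0 := by
  have h := hXpow_ne_one (2*j) (by omega)
  intro hc
  apply h
  have : QQ^j = 1 := by linear_combination -hc
  rw [← this, QQ, ← pow_mul]

lemma gN_zero (n : ℕ) : gN n 0 = 1 := by
  unfold gN
  rw [if_pos (Nat.zero_le n)]
  simp [Pq, qPoch]
  exact Pq_ne n

lemma gN_self (n : ℕ) : gN n n = 1 := by
  unfold gN
  rw [if_pos le_rfl, Nat.sub_self]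
  have : Pq 0 = 1 := by simp [Pq, qPoch]
  rw [this, mul_one, div_self (Pq_ne n)]

lemma gN_of_lt {n m : ℕ} (h : n < m) : gN n m = 0 := by
  unfold gN
  rw [if_neg (by omega)]

lemma gN_ne_zero {n m : ℕ} (h : gN n m ≠ 0) : m ≤ n := by
  by_contra hc
  exact h (gN_of_lt (by omega))

lemma gauss_eq_gN (n m : ℕ) : gauss QQ (n:ℤ) (m:ℤ) = gN n m := by
  unfold gauss gN
  by_cases h : m ≤ n
  · rw [if_pos ⟨Int.natCast_nonneg m, by exact_mod_cast h⟩, if_pos h]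
    have h1 : ((n:ℤ)).toNat = n := Int.toNat_natCast n
    have h2 : ((m:ℤ)).toNat = m := Int.toNat_natCast m
    have h3 : ((n:ℤ) - m).toNat = n - m := by omega
    rw [h1, h2, h3]
    rfl
  · rw [if_neg (by intro ⟨_,h2⟩; exact h (by exact_mod_cast h2)), if_neg h]

lemma gN_mul {n m : ℕ} (h : m ≤ n) : gN n m * (Pq m * Pq (n-m)) = Pq n := by
  unfold gN
  rw [if_pos h]
  exact div_mul_cancel₀ _ (mul_ne_zero (Pq_ne _) (Pq_ne _))

/-- Pascal, form 1: `[n+1, m+1] = [n, m+1] + Q^{n-m} [n, m]`. -/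
lemma pascal1 (n m : ℕ) : gN (n+1) (m+1) = gN n (m+1) + QQ^(n-m) * gN n m := by
  rcases lt_trichotomy m n with h | h | h
  · have hmn : m + 1 ≤ n := h
    refine mul_right_cancel₀ (mul_ne_zero (Pq_ne (m+1)) (Pq_ne (n-m))) ?_
    have hp1 : Pq (n+1) = Pq n * (1 - QQ^(n+1)) := Pq_succ n
    have hp2 : Pq (n-m) = Pq (n-(m+1)) * (1 - QQ^(n-m)) := by
      have e2 : n - m = (n - (m+1)) + 1 := by omega
      rw [e2, Pq_succ]
    have hp3 : Pq (m+1) = Pq m * (1 - QQ^(m+1)) := Pq_succ m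
    have hq : QQ^(n-m) * QQ^(m+1) = QQ^(n+1) := by
      rw [← pow_add]; congr 1; omega
    have h1 : gN (n+1) (m+1) * (Pq (m+1) * Pq (n-m)) = Pq n * (1 - QQ^(n+1)) := by
      have := gN_mul (show m+1 ≤ n+1 by omega)
      rw [show n+1-(m+1) = n-m from by omega] at this
      rw [this, hp1]
    have h2 : gN n (m+1) * (Pq (m+1) * Pq (n-m)) = Pq n * (1 - QQ^(n-m)) := by
      have := gN_mul (show m+1 ≤ n from hmn)
      rw [hp2]
      linear_combination (1 - QQ^(n-m)) * this
    have h3 : QQ^(n-m) * gN n m * (Pq (m+1) * Pq (n-m)) = QQ^(n-m) * (1-QQ^(m+1)) * Pq n := by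
      have := gN_mul (show m ≤ n by omega)
      rw [hp3]
      linear_combination QQ^(n-m) * (1-QQ^(m+1)) * this
    linear_combination h1 - h2 - h3 + Pq n * hq
  · subst h
    rw [gN_self, gN_self, gN_of_lt (show m < m+1 by omega), Nat.sub_self, pow_zero]
    ring
  · rw [gN_of_lt (show n+1 < m+1 by omega), gN_of_lt (show n < m by omega),
      gN_of_lt (show n < m+1 by omega)]
    ring

/-- Pascal, form 2: `[n+1, m+1] = [n, m] + Q^{m+1} [n, m+1]`. -/
lemma pascal2 (n m : ℕ) : gN (n+1) (m+1) = gN n m + QQ^(m+1) * gN n (m+1) := by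
  rcases lt_trichotomy m n with h | h | h
  · have hmn : m + 1 ≤ n := h
    refine mul_right_cancel₀ (mul_ne_zero (Pq_ne (m+1)) (Pq_ne (n-m))) ?_
    have hp1 : Pq (n+1) = Pq n * (1 - QQ^(n+1)) := Pq_succ n
    have hp2 : Pq (n-m) = Pq (n-(m+1)) * (1 - QQ^(n-m)) := by
      have e2 : n - m = (n - (m+1)) + 1 := by omega
      rw [e2, Pq_succ]
    have hp3 : Pq (m+1) = Pq m * (1 - QQ^(m+1)) := Pq_succ m
    have hq : QQ^(m+1) * QQ^(n-m) = QQ^(n+1) := by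
      rw [← pow_add]; congr 1; omega
    have h1 : gN (n+1) (m+1) * (Pq (m+1) * Pq (n-m)) = Pq n * (1 - QQ^(n+1)) := by
      have := gN_mul (show m+1 ≤ n+1 by omega)
      rw [show n+1-(m+1) = n-m from by omega] at this
      rw [this, hp1]
    have h2 : gN n m * (Pq (m+1) * Pq (n-m)) = Pq n * (1 - QQ^(m+1)) := by
      have := gN_mul (show m ≤ n by omega)
      rw [hp3]
      linear_combination (1 - QQ^(m+1)) * this
    have h3 : QQ^(m+1) * gN n (m+1) * (Pq (m+1) * Pq (n-m)) = QQ^(m+1) * (1-QQ^(n-m)) * Pq n := by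
      have := gN_mul (show m+1 ≤ n from hmn)
      rw [hp2]
      linear_combination QQ^(m+1) * (1-QQ^(n-m)) * this
    linear_combination h1 - h2 - h3 + Pq n * hq
  · subst h
    rw [gN_self, gN_self, gN_of_lt (show m < m+1 by omega)]
    ring
  · rw [gN_of_lt (show n+1 < m+1 by omega), gN_of_lt (show n < m by omega),
      gN_of_lt (show n < m+1 by omega)]
    ring

lemma gN_one (n : ℕ) : gN n 1 * (1 - QQ) = 1 - QQ^n := by
  induction n with
  | zero => rw [gN_of_lt (by omega)]; norm_num
  | succ n ih =>
    have := pascal2 n 0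
    rw [gN_zero] at this
    rw [this]
    have hQ : (1 - QQ^(n+1)) = (1-QQ) + QQ * (1 - QQ^n) := by
      rw [pow_succ]; ring
    rw [hQ]
    linear_combination QQ * ih

lemma Ss_zero : Ss 0 = 1 := by
  unfold Ss
  norm_num

lemma Ss_succ (m : ℕ) : Ss (m+1) = Ss m + 2 * (-Xq)^((m+1)*(m+1)) := by
  unfold Ss
  have hset : Finset.Icc (-((m:ℤ)+1)) ((m:ℤ)+1) =
      insert (-((m:ℤ)+1)) (insert ((m:ℤ)+1) (Finset.Icc (-(m:ℤ)) (m:ℤ))) := by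
    ext x
    simp only [Finset.mem_Icc, Finset.mem_insert]
    omega
  have h1 : (-((m:ℤ)+1)) ∉ insert ((m:ℤ)+1) (Finset.Icc (-(m:ℤ)) (m:ℤ)) := by
    simp only [Finset.mem_insert, Finset.mem_Icc]; omega
  have h2 : ((m:ℤ)+1) ∉ Finset.Icc (-(m:ℤ)) (m:ℤ) := by
    simp only [Finset.mem_Icc]; omega
  have hcast : (((m:ℤ)+1)^2).toNat = (m+1)*(m+1) := by
    have : ((m:ℤ)+1)^2 = (((m+1)*(m+1) : ℕ) : ℤ) := by push_cast; ring
    rw [this, Int.toNat_natCast]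
  have hcast2 : ((-((m:ℤ)+1))^2).toNat = (m+1)*(m+1) := by
    have : (-((m:ℤ)+1))^2 = (((m+1)*(m+1) : ℕ) : ℤ) := by push_cast; ring
    rw [this, Int.toNat_natCast]
  push_cast
  rw [hset, Finset.sum_insert h1, Finset.sum_insert h2, hcast, hcast2]
  ring

lemma neg_pow_sq (x : RatFunc ℚ) (m : ℕ) : (-x)^(m*m) = (-1)^m * x^(m*m) := by
  rw [neg_pow]
  congr 1
  rcases Nat.even_or_odd m with h | h
  · rw [(h.mul_right m).neg_one_pow, h.neg_one_pow]
  · rw [(h.mul h).neg_one_pow, h.neg_one_pow]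

lemma T_succ {R : Type*} [CommRing R] (t q : R) (k : ℕ) :
    T t q (k+1) = T t q k + (1 + t) * (-q) ^ ((k+1)^2) +
      (1 - t^2) * ∑ i ∈ Finset.range k, (-q) ^ ((k+1)^2 - (i+1)^2) * T t q i := by
  rw [T]
  congr 1
  congr 1
  exact Finset.sum_attach (Finset.range k) (fun i => (-q) ^ ((k+1)^2 - (i+1)^2) * T t q i)

/-- Three-term recursion for `T`. -/
lemma T_rec {R : Type*} [CommRing R] (t q : R) (k : ℕ) :
    T t q (k+2) = (1 - q^(2*k+3)) * T t q (k+1) + t^2 * q^(2*k+3) * T t q k := by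
  have h2 := T_succ t q (k+1)
  have h1 := T_succ t q k
  have hsplit : ∑ i ∈ Finset.range (k+1), (-q) ^ ((k+2)^2 - (i+1)^2) * T t q i
      = (-q)^(2*k+3) * (∑ i ∈ Finset.range k, (-q) ^ ((k+1)^2 - (i+1)^2) * T t q i)
        + (-q)^(2*k+3) * T t q k := by
    rw [Finset.sum_range_succ, Finset.mul_sum]
    congr 1
    · apply Finset.sum_congr rfl
      intro i hi
      have hi' : i < k := Finset.mem_range.mp hi
      have he : (k+2)^2 - (i+1)^2 = (2*k+3) + ((k+1)^2 - (i+1)^2) := by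
        have hab : (i+1)^2 ≤ (k+1)^2 := Nat.pow_le_pow_left (by omega) 2
        have e0 : (k+2)^2 = 2*k+3 + (k+1)^2 := by ring
        rw [e0]
        generalize (k+1)^2 = a at hab ⊢
        generalize (i+1)^2 = c at hab ⊢
        omega
      rw [he, pow_add, mul_assoc]
    · congr 1
      congr 1
      have e0 : (k+2)^2 = 2*k+3 + (k+1)^2 := by ring
      rw [e0]
      generalize (k+1)^2 = a
      omega
  have hodd : (-q)^(2*k+3) = -(q^(2*k+3)) := Odd.neg_pow ⟨k+1, by ring⟩ q
  have hsq : (-q) ^ ((k+2)^2) = (-q)^((k+1)^2) * (-q)^(2*k+3) := by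
    rw [← pow_add]
    congr 1
    simp only [pow_two]
    ring
  rw [h2, hsplit, hsq, hodd]
  have h1' : (1 - t^2) * ∑ i ∈ Finset.range k, (-q) ^ ((k+1)^2 - (i+1)^2) * T t q i
      = T t q (k+1) - T t q k - (1 + t) * (-q) ^ ((k+1)^2) := by
    linear_combination -h1
  linear_combination (-(q^(2*k+3))) * h1'


lemma le_sq (j : ℕ) : j ≤ j*j := by
  rcases Nat.eq_zero_or_pos j with h | h
  · simp [h]
  · exact Nat.le_mul_of_pos_left j h

lemma Uu_one (b : ℕ) : Uu b 1 = ∑ i ∈ range b, Pp i * Xq^(2*i) := by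
  unfold Uu
  rw [if_neg one_ne_zero]
  refine Finset.sum_congr rfl fun i _ => ?_
  rw [gN_zero, mul_one]

lemma Pp_zero : Pp 0 = 1 := by simp [Pp, qPoch]

lemma Uu_zero (b : ℕ) : Uu b 0 = Pp b := by unfold Uu; rw [if_pos rfl]

/-- `q³ U(b,1) + 1 - 2q = (1 - q - q^{b+1}) (q;q)_b`. -/
lemma Zb (b : ℕ) : Xq^3 * Uu b 1 + 1 - 2*Xq = (1 - Xq - Xq^(b+1)) * Pp b := by
  induction b with
  | zero =>
    rw [Uu_one, Pp_zero]
    simp only [Finset.range_zero, Finset.sum_empty, mul_zero, pow_succ, pow_zero]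
    ring
  | succ b ih =>
    rw [Uu_one, Finset.sum_range_succ, ← Uu_one, Pp_succ]
    rw [Uu_one] at ih
    rw [Uu_one]
    linear_combination ih

lemma U_rec (b k : ℕ) (hk : 1 ≤ k) :
    Xq^(2*k) * Uu (b+1) k = Xq^(2*k) * Uu b k + Xq^(2*b+2) * Uu b (k-1) := by
  match k, hk with
  | 1, _ =>
    rw [show (1:ℕ)-1 = 0 from rfl, Uu_zero]
    rw [Uu_one, Uu_one, Finset.sum_range_succ]
    ring
  | (m+2), _ =>
    have hz : gN 0 (m+1) = 0 := gN_of_lt (by omega)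
    unfold Uu
    rw [if_neg (by omega), if_neg (by omega), if_neg (by omega)]
    simp only [show m+2-1 = m+1 by omega, show m+1-1 = m by omega, show m+2-2 = m by omega]
    rw [Finset.sum_range_succ]
    have hlast : Pp b * Xq ^ (2 * (m + 2) * b) * gN (b + 1 - 1 - b) (m + 1) = 0 := by
      rw [show b+1-1-b = 0 from by omega, hz, mul_zero]
    rw [hlast, add_zero]
    rw [Finset.mul_sum, Finset.mul_sum, Finset.mul_sum, ← Finset.sum_add_distrib]
    refine Finset.sum_congr rfl fun i hi => ?_
    have hi' : i < b := Finset.mem_range.mp hi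
    have hbp : b + 1 - 1 - i = (b-1-i) + 1 := by omega
    rw [hbp, pascal1 (b-1-i) m]
    rcases eq_or_ne (gN (b-1-i) m) 0 with h0 | h0
    · rw [h0]
      ring
    · have hle : m ≤ b - 1 - i := gN_ne_zero h0
      have hpow : Xq^(2*(m+2)) * Xq^(2*(m+2)*i) * QQ^(b-1-i-m) = Xq^(2*b+2) * Xq^(2*(m+1)*i) := by
        rw [QQ, ← pow_mul, ← pow_add, ← pow_add, ← pow_add]
        congr 1
        have e1 : 2*(m+2)*i = 2*(m*i)+4*i := by ring
        have e2 : 2*(m+1)*i = 2*(m*i)+2*i := by ring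
        rw [e1, e2]
        generalize m*i = a
        omega
      linear_combination (Pp i * gN (b-1-i) m) * hpow

lemma W_rec (b k : ℕ) :
    Ww (b+1) (k+1) = Ww b (k+1) - Xq^(2*b+2) * Ww b k := by
  unfold Ww
  rw [Finset.sum_range_succ' _ k, Finset.sum_range_succ' _ k]
  simp only [gN_zero]
  rw [Finset.mul_sum, eq_sub_iff_add_eq, add_right_comm, ← Finset.sum_add_distrib]
  congr 1
  refine Finset.sum_congr rfl fun j hj => ?_
  have hp : gN (b+1+1) (j+1) = gN (b+1) (j+1) + QQ^(b+1-j) * gN (b+1) j := pascal1 (b+1) j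
  rw [hp]
  rcases eq_or_ne (gN (b+1) j) 0 with h0 | h0
  · rw [h0]
    ring
  · have hle : j ≤ b + 1 := gN_ne_zero h0
    have hpow : Xq^((j+1)*(j+1)-(j+1)) * QQ^(b+1-j) = Xq^(2*b+2) * Xq^(j*j-j) := by
      rw [QQ, ← pow_mul, ← pow_add, ← pow_add]
      congr 1
      have e1 : (j+1)*(j+1) = (j*j+j) + (j+1) := by ring
      rw [e1, Nat.add_sub_cancel]
      have hs : j ≤ j*j := le_sq j
      generalize j*j = c at hs ⊢
      omega
    linear_combination ((-1:RatFunc ℚ)^(j+1) * gN (b+1) j) * hpow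

lemma Uu_nil (k : ℕ) (hk : 1 ≤ k) : Uu 0 k = 0 := by
  unfold Uu
  rw [if_neg (by omega)]
  simp

lemma Ww_one (b : ℕ) : Ww b 1 = 1 := by
  unfold Ww
  rw [Finset.sum_range_one, gN_zero]
  norm_num

lemma Ww_nil (j : ℕ) : Ww 0 (j+2) = 0 := by
  induction j with
  | zero =>
    unfold Ww
    rw [Finset.sum_range_succ, Finset.sum_range_one, gN_zero, gN_self]
    norm_num
  | succ j ih =>
    unfold Ww at ih ⊢
    rw [Finset.sum_range_succ, ih, gN_of_lt (by omega)]
    ring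

/-- Expansion of `Ll` at `k+2` with subtraction-free exponents. -/
lemma Ll_eq (b k : ℕ) : Ll b (k+2)
    = Xq^(k*k+8*k+11) * Uu b (k+2) - (1 - Xq^(2*k+3)) * Xq^(k*k+4*k+4) * Uu b (k+1)
      - Xq^(k*k+2*k+4+2*b) * Uu b k + Xq^(k*k+4*k+4) * gN (b+1) (k+1)
      + 2 * (-1:RatFunc ℚ)^k * Xq^(3*k+5) * Ww b (k+2) := by
  unfold Ll
  have hs : k ≤ k*k := le_sq k
  have e1 : (k+2)*(k+2)+4*(k+2)-1 = k*k+8*k+11 := by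
    have h : (k+2)*(k+2)+4*(k+2) = k*k+8*k+12 := by ring
    rw [h]
    generalize k*k = a
    omega
  have e2 : 2*(k+2)-1 = 2*k+3 := by omega
  have e3 : (k+2)*(k+2) = k*k+4*k+4 := by ring
  have e4 : (k+2)*(k+2)-2*(k+2)+4+2*b = k*k+2*k+4+2*b := by
    have h : (k+2)*(k+2) = (k*k+2*k) + (2*k+4) := by ring
    rw [h]
    generalize k*k = a
    omega
  have e5 : 3*(k+2)-1 = 3*k+5 := by omega
  have e6 : k+2-1 = k+1 := rfl
  have e7 : k+2-2 = k := rfl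
  rw [e1, e2, e4, e5, e6, e7, e3, pow_add ((-1:RatFunc ℚ)) k 2]
  ring

lemma L_two (b : ℕ) : Ll b 2 = 0 := by
  induction b with
  | zero =>
    rw [show (2:ℕ) = 0+2 from rfl, Ll_eq]
    rw [Uu_nil 2 (by omega), Uu_nil 1 (by omega), Uu_zero, Pp_zero, gN_self]
    rw [show (0:ℕ)+2 = 2 from rfl]
    have hW : Ww 0 2 = 0 := Ww_nil 0
    rw [hW]
    norm_num
  | succ b ih =>
    rw [show (2:ℕ) = 0+2 from rfl, Ll_eq] at ih ⊢
    rw [show (0:ℕ)+2 = 2 from rfl, show (0:ℕ)+1 = 1 from rfl] at ih ⊢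
    have hU2 := U_rec b 2 (by omega)
    have hU1 := U_rec b 1 (by omega)
    rw [show (2:ℕ)-1 = 1 from rfl] at hU2
    rw [show (1:ℕ)-1 = 0 from rfl, Uu_zero] at hU1
    have hC : gN (b+1+1) 1 = gN (b+1) 1 + Xq^(2*b+2) := by
      have hp := pascal1 (b+1) 0
      rw [gN_zero, mul_one, Nat.sub_zero, QQ, ← pow_mul] at hp
      rw [hp, show 2*(b+1) = 2*b+2 from by omega]
    have hW : Ww (b+1) 2 = Ww b 2 - Xq^(2*b+2) := by
      have := W_rec b 1
      rw [Ww_one] at this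
      rw [this, mul_one]
    have hZ := Zb b
    simp only [Uu_one, Uu_zero] at ih hU2 hU1 hZ ⊢
    rw [hC, hW, Pp_succ]
    linear_combination ih + Xq^7 * hU2 - (1-Xq^3)*Xq^2 * hU1 + Xq^(2*b+6) * hZ

lemma L_rec (b k : ℕ) :
    Xq^(2*(k+3)) * Ll (b+1) (k+3) = Xq^(2*(k+3)) * Ll b (k+3) + Xq^(2*b+2*(k+3)+5) * Ll b (k+2) := by
  rw [show k+3 = (k+1)+2 from rfl, Ll_eq (b+1) (k+1), Ll_eq b (k+1), Ll_eq b k]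
  simp only [show (k+1)+2 = k+3 from rfl, show (k+1)+1 = k+2 from rfl]
  have hUk := U_rec b (k+3) (by omega)
  have hUk1 := U_rec b (k+2) (by omega)
  have hUk2 := U_rec b (k+1) (by omega)
  simp only [show k+3-1 = k+2 from rfl, show k+2-1 = k+1 from rfl, show k+1-1 = k from rfl]
    at hUk hUk1 hUk2
  have hW := W_rec b (k+2)
  have hC : Xq^(2*(k+3)) * gN (b+1+1) (k+2) =
      Xq^(2*(k+3)) * gN (b+1) (k+2) + Xq^(2*b+6) * gN (b+1) (k+1) := by
    have hp := pascal1 (b+1) (k+1)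
    rw [hp]
    rcases eq_or_ne (gN (b+1) (k+1)) 0 with h0 | h0
    · rw [h0]
      ring
    · have hle : k+1 ≤ b+1 := gN_ne_zero h0
      have hpow : Xq^(2*(k+3)) * QQ^(b+1-(k+1)) = Xq^(2*b+6) := by
        rw [QQ, ← pow_mul, ← pow_add]
        congr 1
        omega
      linear_combination (gN (b+1) (k+1)) * hpow
  linear_combination Xq^(k*k+10*k+20) * hUk
    - (1-Xq^(2*k+5)) * Xq^(k*k+6*k+11) * hUk1
    - Xq^(k*k+4*k+7+2*b+6) * hUk2
    + Xq^(k*k+6*k+9) * hC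
    + 2 * (-1:RatFunc ℚ)^(k+1) * Xq^(5*k+14) * hW

lemma L_zero (b k : ℕ) (hk : 2 ≤ k) : Ll b k = 0 := by
  induction b generalizing k with
  | zero =>
    match k, hk with
    | 2, _ => exact L_two 0
    | (m+3), _ =>
      rw [show m+3 = (m+1)+2 from rfl, Ll_eq]
      rw [Uu_nil ((m+1)+2) (by omega), Uu_nil ((m+1)+1) (by omega), Uu_nil (m+1) (by omega)]
      rw [gN_of_lt (by omega), show (m+1)+2 = m+3 from rfl, show m+3 = (m+1)+2 from rfl]
      rw [Ww_nil (m+1)]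
      ring
  | succ b ih =>
    match k, hk with
    | 2, _ => exact L_two (b+1)
    | (m+3), _ =>
      have hrec := L_rec b m
      rw [ih (m+3) (by omega), ih (m+2) (by omega)] at hrec
      simp only [mul_zero, add_zero] at hrec
      have hne : (Xq:RatFunc ℚ)^(2*(m+3)) ≠ 0 := pow_ne_zero _ hX
      rcases mul_eq_zero.mp hrec with h | h
      · exact absurd h hne
      · exact h

/-- The `A`-part of the right-hand side, without the `1/(q;q)_b` factor. -/
def Aa (b k : ℕ) : RatFunc ℚ := ∑ i ∈ range k, Xq^(i*(2*k+1)) * gN b i * Ss (k-i)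

lemma dA1 (b k : ℕ) :
    Aa b (k+2) - (1 - Xq^(2*k+3)) * Aa b (k+1) - Xq^(2*b+2*k+3) * Aa b k
      = (∑ i ∈ range (k+2), Xq^(i*(2*k+3)) * gN (b+1) i * Ss (k+2-i))
        - ∑ i ∈ range (k+1), Xq^(i*(2*k+3)) * gN (b+1) i * Ss (k+1-i) := by
  unfold Aa
  simp only [show 2*(k+2)+1 = 2*k+5 from by ring, show 2*(k+1)+1 = 2*k+3 from by ring]
  simp only [Finset.sum_range_succ']
  have key : ∀ i ∈ range k,
      Xq^((i+1+1)*(2*k+5)) * gN b (i+1+1) * Ss (k+2-(i+1+1))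
        = (1-Xq^(2*k+3)) * (Xq^((i+1)*(2*k+3)) * gN b (i+1) * Ss (k+1-(i+1)))
          + Xq^(2*b+2*k+3) * (Xq^(i*(2*k+1)) * gN b i * Ss (k-i))
          + Xq^((i+1+1)*(2*k+3)) * gN (b+1) (i+1+1) * Ss (k+2-(i+1+1))
          - Xq^((i+1)*(2*k+3)) * gN (b+1) (i+1) * Ss (k+1-(i+1)) := by
    intro i hi
    have hik : i < k := Finset.mem_range.mp hi
    rw [show k+2-(i+1+1) = k-i from by omega, show k+1-(i+1) = k-i from by omega]
    rw [pascal2 b (i+1), pascal1 b i, QQ]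
    rcases eq_or_ne (gN b i) 0 with h0 | h0
    · rw [h0]
      ring
    · have hle : i ≤ b := gN_ne_zero h0
      have hpow : Xq^((i+1)*(2*k+3)) * (Xq^2)^(b-i) = Xq^(2*b+2*k+3) * Xq^(i*(2*k+1)) := by
        rw [← pow_mul, ← pow_add, ← pow_add]
        obtain ⟨e, he⟩ := Nat.exists_eq_add_of_le hle
        rw [show b-i = e from by omega, he]
        congr 1
        ring
      linear_combination (gN b i * Ss (k-i)) * hpow
  have hsum := Finset.sum_congr rfl key
  rw [Finset.sum_sub_distrib, Finset.sum_add_distrib, Finset.sum_add_distrib,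
    ← Finset.mul_sum, ← Finset.mul_sum] at hsum
  have h1 : gN b 0 = gN (b+1) 0 := by rw [gN_zero, gN_zero]
  have h2 : Xq^((0+1)*(2*k+5)) * gN b (0+1) * Ss (k+2-(0+1))
      = (1-Xq^(2*k+3)) * (Xq^(0*(2*k+3)) * gN b 0 * Ss (k+1-0))
        + Xq^((0+1)*(2*k+3)) * gN (b+1) (0+1) * Ss (k+2-(0+1))
        - Xq^(0*(2*k+3)) * gN (b+1) 0 * Ss (k+1-0) := by
    rw [show k+2-(0+1) = k+1 from by omega, show k+1-0 = k+1 from rfl]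
    rw [gN_zero, gN_zero]
    have hp := pascal2 b 0
    rw [gN_zero] at hp
    rw [show (0:ℕ)+1 = 1 from rfl, hp, QQ]
    ring
  linear_combination hsum + h2 + (Ss (k+2-0)) * h1

lemma dA (b k : ℕ) :
    Aa b (k+2) - (1 - Xq^(2*k+3)) * Aa b (k+1) - Xq^(2*b+2*k+3) * Aa b k
      = 2 * ∑ i ∈ range (k+2), (-1:RatFunc ℚ)^(k+2-i) * Xq^((k+2)*(k+2)+i*i-i) * gN (b+1) i
        + Xq^((k+1)*(2*k+3)) * gN (b+1) (k+1) := by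
  rw [dA1]
  rw [Finset.sum_range_succ (fun i => Xq^(i*(2*k+3)) * gN (b+1) i * Ss (k+2-i)) (k+1),
      Finset.sum_range_succ
        (fun i => (-1:RatFunc ℚ)^(k+2-i) * Xq^((k+2)*(k+2)+i*i-i) * gN (b+1) i) (k+1)]
  have hSs1 : Ss 1 = 1 - 2*Xq := by
    rw [show Ss 1 = Ss (0+1) from rfl, Ss_succ, Ss_zero]
    norm_num
    ring
  have key : ∀ i ∈ range (k+1),
      Xq^(i*(2*k+3)) * gN (b+1) i * Ss (k+2-i)
        = Xq^(i*(2*k+3)) * gN (b+1) i * Ss (k+1-i)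
          + 2 * ((-1:RatFunc ℚ)^(k+2-i) * Xq^((k+2)*(k+2)+i*i-i) * gN (b+1) i) := by
    intro i hi
    have hik : i < k+1 := Finset.mem_range.mp hi
    rw [show k+2-i = (k+1-i)+1 from by omega, Ss_succ (k+1-i)]
    have hns := neg_pow_sq Xq ((k+1-i)+1)
    rw [hns]
    have hsgn2 : ((-1:RatFunc ℚ))^(k+2-i) + (-1:RatFunc ℚ)^(k+1-i) = 0 := by
      rw [show k+2-i = (k+1-i)+1 from by omega]
      ring
    have hii : i ≤ i*i := le_sq i
    obtain ⟨e, he⟩ := Nat.exists_eq_add_of_le (show i ≤ k+1 from by omega)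
    have hpow : Xq^(i*(2*k+3)) * Xq^(((k+1-i)+1)*((k+1-i)+1)) = Xq^((k+2)*(k+2)+i*i-i) := by
      rw [← pow_add]
      congr 1
      rw [show (k+1-i)+1 = e+1 from by omega]
      have P1 : i*(2*k+3) + (e+1)*(e+1) + i = (k+2)*(k+2) + i*i := by
        rw [show 2*k+3 = 2*i+2*e+1 from by omega, show k+2 = i+e+1 from by omega]
        ring
      generalize hA : i*(2*k+3) = A at P1 ⊢
      generalize hB : (e+1)*(e+1) = B at P1 ⊢
      generalize hC : (k+2)*(k+2) = C at P1 ⊢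
      generalize hD : i*i = D at P1 hii ⊢
      omega
    linear_combination (2 * gN (b+1) i * (-1:RatFunc ℚ)^((k+1-i)+1)) * hpow
  have hsum := Finset.sum_congr rfl key
  rw [Finset.sum_add_distrib, ← Finset.mul_sum] at hsum
  have hb : Xq^((k+1)*(2*k+3)) * gN (b+1) (k+1) * Ss (k+2-(k+1))
      = Xq^((k+1)*(2*k+3)) * gN (b+1) (k+1) * (1 - 2*Xq) := by
    rw [show k+2-(k+1) = 1 from by omega, hSs1]
  have hb2 : (-1:RatFunc ℚ)^(k+2-(k+1)) * Xq^((k+2)*(k+2)+(k+1)*(k+1)-(k+1)) * gN (b+1) (k+1)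
      = -(Xq^((k+1)*(2*k+3)+1) * gN (b+1) (k+1)) := by
    rw [show k+2-(k+1) = 1 from by omega, pow_one]
    rw [show (k+2)*(k+2)+(k+1)*(k+1)-(k+1) = (k+1)*(2*k+3)+1 from by
      have h : (k+2)*(k+2)+(k+1)*(k+1) = ((k+1)*(2*k+3)+1) + (k+1) := by ring
      rw [h]
      generalize (k+1)*(2*k+3) = A
      omega]
    ring
  linear_combination hsum + hb - 2 * hb2

/-- The right-hand side of the main statement. -/
def Rhs (b k : ℕ) : RatFunc ℚ :=
  (∑ i ∈ Finset.range k,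
      Xq^(i*(2*k+1)) / qPoch Xq Xq b * gauss (Xq^2) (b:ℤ) (i:ℤ) *
        ∑ j ∈ Finset.Icc (-((k:ℤ) - i)) ((k:ℤ) - i), (-Xq) ^ (j^2).toNat)
    + ∑ i ∈ Finset.range b,
        qPoch Xq Xq i / qPoch Xq Xq b * Xq^(k*(2*k+2*i+1)) *
          gauss (Xq^2) ((b:ℤ) - i - 1) ((k:ℤ) - 1)

lemma QQ_eq : QQ = Xq^2 := rfl

lemma gauss_eq_gN' (n m : ℕ) : gauss (Xq^2) (n:ℤ) (m:ℤ) = gN n m := gauss_eq_gN n m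

lemma Rhs_eq (b k : ℕ) (hk : 1 ≤ k) :
    Rhs b k = (Pp b)⁻¹ * (Aa b k + Xq^(k*(2*k+1)) * Uu b k) := by
  obtain ⟨m, rfl⟩ : ∃ m, k = m+1 := ⟨k-1, by omega⟩
  have h1 : ∑ i ∈ Finset.range (m+1),
      (Xq ^ (i * (2 * (m+1) + 1)) / qPoch Xq Xq b * gauss (Xq^2) (b:ℤ) (i:ℤ) *
        ∑ j ∈ Finset.Icc (-(((m+1:ℕ):ℤ) - (i:ℤ))) (((m+1:ℕ):ℤ) - (i:ℤ)), (-Xq) ^ ((j^2).toNat))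
      = ∑ i ∈ Finset.range (m+1),
        (Pp b)⁻¹ * (Xq ^ (i * (2 * (m+1) + 1)) * gN b i * Ss (m+1-i)) := by
    refine Finset.sum_congr rfl fun i hi => ?_
    have hik : i < m+1 := Finset.mem_range.mp hi
    have hc : ((m+1:ℕ):ℤ) - (i:ℤ) = (((m+1-i:ℕ)):ℤ) := by push_cast; omega
    rw [hc, gauss_eq_gN' b i, Ss, Pp]
    ring
  have h2 : ∑ i ∈ Finset.range b,
      (qPoch Xq Xq i / qPoch Xq Xq b * Xq ^ ((m+1) * (2 * (m+1) + 2 * i + 1)) *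
        gauss (Xq^2) ((b:ℤ) - (i:ℤ) - 1) (((m+1:ℕ):ℤ) - 1))
      = ∑ i ∈ Finset.range b,
        (Pp b)⁻¹ * (Xq ^ ((m+1) * (2 * (m+1) + 1)) *
          (Pp i * Xq ^ (2 * (m+1) * i) * gN (b-1-i) ((m+1)-1))) := by
    refine Finset.sum_congr rfl fun i hi => ?_
    have hib : i < b := Finset.mem_range.mp hi
    have hc1 : ((b:ℤ)) - (i:ℤ) - 1 = (((b-1-i:ℕ)):ℤ) := by push_cast; omega
    have hc2 : ((m+1:ℕ):ℤ) - 1 = ((m:ℕ):ℤ) := by push_cast; omega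
    rw [hc1, hc2, gauss_eq_gN' (b-1-i) m, show (m+1)-1 = m from rfl,
      show (m+1) * (2 * (m+1) + 2 * i + 1) = (m+1) * (2 * (m+1) + 1) + 2 * (m+1) * i from by ring,
      pow_add, Pp, Pp]
    ring
  have e1 : ∑ i ∈ Finset.range (m+1),
        (Pp b)⁻¹ * (Xq ^ (i * (2 * (m+1) + 1)) * gN b i * Ss (m+1-i))
      = (Pp b)⁻¹ * ∑ i ∈ Finset.range (m+1),
          Xq ^ (i * (2 * (m+1) + 1)) * gN b i * Ss (m+1-i) := by
    rw [Finset.mul_sum]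
  have e2 : ∑ i ∈ Finset.range b,
        (Pp b)⁻¹ * (Xq ^ ((m+1) * (2 * (m+1) + 1)) *
          (Pp i * Xq ^ (2 * (m+1) * i) * gN (b-1-i) ((m+1)-1)))
      = (Pp b)⁻¹ * (Xq ^ ((m+1) * (2 * (m+1) + 1)) *
          ∑ i ∈ Finset.range b, Pp i * Xq ^ (2 * (m+1) * i) * gN (b-1-i) ((m+1)-1)) := by
    rw [Finset.mul_sum, Finset.mul_sum]
  have hU : Uu b (m+1) = ∑ i ∈ Finset.range b, Pp i * Xq ^ (2 * (m+1) * i) * gN (b-1-i) ((m+1)-1) := by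
    unfold Uu
    rw [if_neg (by omega)]
  show (∑ i ∈ Finset.range (m+1),
      Xq ^ (i * (2 * (m+1) + 1)) / qPoch Xq Xq b * gauss (Xq^2) (b:ℤ) (i:ℤ) *
        ∑ j ∈ Finset.Icc (-(((m+1:ℕ):ℤ) - (i:ℤ))) (((m+1:ℕ):ℤ) - (i:ℤ)), (-Xq) ^ ((j^2).toNat))
    + (∑ i ∈ Finset.range b,
      qPoch Xq Xq i / qPoch Xq Xq b * Xq ^ ((m+1) * (2 * (m+1) + 2 * i + 1)) *
        gauss (Xq^2) ((b:ℤ) - (i:ℤ) - 1) (((m+1:ℕ):ℤ) - 1))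
    = (Pp b)⁻¹ * (Aa b (m+1) + Xq^((m+1)*(2*(m+1)+1)) * Uu b (m+1))
  rw [hU]
  unfold Aa
  linear_combination h1 + h2 + e1 + e2

lemma Rhs_rec (b k : ℕ) (hk : 1 ≤ k) :
    Rhs b (k+2) = (1 - Xq^(2*k+3)) * Rhs b (k+1) + Xq^(2*b) * Xq^(2*k+3) * Rhs b k := by
  obtain ⟨m, rfl⟩ : ∃ m, k = m+1 := ⟨k-1, by omega⟩
  rw [Rhs_eq b (m+1+2) (by omega), Rhs_eq b (m+1+1) (by omega), Rhs_eq b (m+1) (by omega)]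
  have hdA := dA b (m+1)
  have hLL := L_zero b (m+1+2) (by omega)
  rw [show m+1+2 = (m+1)+2 from rfl, Ll_eq b (m+1)] at hLL
  have hWs : ∑ i ∈ range ((m+1)+2),
      (-1:RatFunc ℚ)^((m+1)+2-i) * Xq^(((m+1)+2)*((m+1)+2)+i*i-i) * gN (b+1) i
      = (-1:RatFunc ℚ)^(m+1) * Xq^(((m+1)+2)*((m+1)+2)) * Ww b ((m+1)+2) := by
    unfold Ww
    rw [Finset.mul_sum]
    refine Finset.sum_congr rfl fun i hi => ?_
    have hik : i < m+3 := Finset.mem_range.mp hi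
    have hii : i ≤ i*i := le_sq i
    obtain ⟨e, he⟩ : ∃ e, (m+1)+2 = i + e := ⟨(m+1)+2-i, by omega⟩
    rw [show (m+1)+2-i = e from by omega]
    have hsg : (-1:RatFunc ℚ)^e * (-1:RatFunc ℚ)^i = (-1:RatFunc ℚ)^(m+1) := by
      rw [← pow_add, show e+i = ((m+1)+2) from by omega, show (m+1)+2 = (m+1)+2*1 from by omega,
        pow_add, pow_mul]
      norm_num
    have hexp : ((m+1)+2)*((m+1)+2)+i*i-i = ((m+1)+2)*((m+1)+2)+(i*i-i) := by
      generalize ((m+1)+2)*((m+1)+2) = A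
      generalize i*i = B at hii ⊢
      omega
    have hsq : (-1:RatFunc ℚ)^i * (-1:RatFunc ℚ)^i = 1 := by
      rw [← pow_add, show i+i = 2*i from by omega, pow_mul]
      norm_num
    rw [hexp, pow_add]
    linear_combination ((Xq^(((m+1)+2)*((m+1)+2)) * Xq^(i*i-i) * gN (b+1) i) * ((-1:RatFunc ℚ)^i)) * hsg
      - ((Xq^(((m+1)+2)*((m+1)+2)) * Xq^(i*i-i) * gN (b+1) i) * (-1:RatFunc ℚ)^e) * hsq
  linear_combination (Pp b)⁻¹ * hdA + (Pp b)⁻¹ * Xq^(m*m+3*m+1) * hLL + (2*(Pp b)⁻¹) * hWs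

lemma T_zero {R : Type*} [CommRing R] (t q : R) : T t q 0 = 1 := by rw [T]

lemma T_one {R : Type*} [CommRing R] (t q : R) : T t q 1 = 1 + (1+t)*(-q) := by
  have h := T_succ t q 0
  rw [T_zero] at h
  rw [h]
  norm_num

lemma T_two {R : Type*} [CommRing R] (t q : R) :
    T t q 2 = 1 + (1+t)*(-q) + (1+t)*q^4 - (1-t^2)*q^3 := by
  have h := T_succ t q 1
  rw [T_one] at h
  rw [h, Finset.sum_range_one, T_zero, show ((1+1)^2 - (0+1)^2 : ℕ) = 3 from rfl,
    show ((1+1)^2 : ℕ) = 4 from rfl]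
  ring

lemma Ss_one : Ss 1 = 1 - 2*Xq := by
  rw [show Ss 1 = Ss (0+1) from rfl, Ss_succ, Ss_zero, show ((0+1)*(0+1) : ℕ) = 1 from rfl]
  ring

lemma Ss_two : Ss 2 = 1 - 2*Xq + 2*Xq^4 := by
  rw [show (2:ℕ) = 1+1 from rfl, Ss_succ, Ss_one, show ((1+1)*(1+1) : ℕ) = 4 from rfl]
  ring

lemma Ww_two (b : ℕ) : Ww b 2 = 1 - gN (b+1) 1 := by
  unfold Ww
  rw [Finset.sum_range_succ, Finset.sum_range_one, gN_zero]
  ring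

lemma inv_cancel (b : ℕ) (x : RatFunc ℚ) : (Pp b)⁻¹ * (x * Pp b) = x := by
  rw [mul_comm ((Pp b)⁻¹), mul_assoc, mul_inv_cancel₀ (Pp_ne b), mul_one]

lemma base_one (b : ℕ) : T (Xq^b) Xq 1 = Rhs b 1 := by
  rw [Rhs_eq b 1 (by omega), T_one]
  have hA : Aa b 1 = Ss 1 := by
    unfold Aa
    rw [Finset.sum_range_one, gN_zero]
    norm_num
  have key : Aa b 1 + Xq^(1*(2*1+1)) * Uu b 1 = (1 - Xq - Xq^(b+1)) * Pp b := by
    rw [hA, Ss_one, show (1*(2*1+1)) = 3 from rfl]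
    linear_combination Zb b
  rw [key, inv_cancel]
  ring

lemma base_two (b : ℕ) : T (Xq^b) Xq 2 = Rhs b 2 := by
  rw [Rhs_eq b 2 (by omega), T_two]
  have hA : Aa b 2 = Ss 2 + Xq^5 * gN b 1 * Ss 1 := by
    unfold Aa
    rw [Finset.sum_range_succ, Finset.sum_range_one, gN_zero]
    norm_num
  have hLl := L_two b
  rw [show (2:ℕ) = 0+2 from rfl, Ll_eq b 0] at hLl
  rw [show (0:ℕ)+2 = 2 from rfl, show (0:ℕ)+1 = 1 from rfl, Uu_zero, Ww_two] at hLl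
  have hg := gN_one b
  have hG := gN_one (b+1)
  rw [QQ_eq] at hg hG
  have key : (1-Xq^2) * Xq * (Aa b 2 + Xq^(2*(2*2+1)) * Uu b 2)
      = (1-Xq^2) * Xq * ((1 + (1+Xq^b)*(-Xq) + (1+Xq^b)*Xq^4 - (1-(Xq^b)^2)*Xq^3) * Pp b) := by
    rw [hA, Ss_two, Ss_one]
    linear_combination (1-Xq^2) * hLl + ((1-Xq^2)*(1-Xq^3)*Xq) * (Zb b)
      + (Xq^6*(1-2*Xq)) * hg + (2*Xq^5-Xq^4) * hG
  have hne : ((1:RatFunc ℚ)-Xq^2) * Xq ≠ 0 := by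
    have h1 : ((1:RatFunc ℚ)-Xq^2) ≠ 0 := by
      have := one_sub_QQ_pow_ne 1 (by omega)
      rw [QQ_eq, pow_one] at this
      exact this
    exact mul_ne_zero h1 hX
  have key2 : Aa b 2 + Xq^(2*(2*2+1)) * Uu b 2
      = (1 + (1+Xq^b)*(-Xq) + (1+Xq^b)*Xq^4 - (1-(Xq^b)^2)*Xq^3) * Pp b :=
    mul_left_cancel₀ hne key
  rw [key2, inv_cancel]

lemma main_all (b k : ℕ) (hk : 1 ≤ k) : T (Xq^b) Xq k = Rhs b k := by
  obtain ⟨m, rfl⟩ : ∃ m, k = m+1 := ⟨k-1, by omega⟩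
  clear hk
  suffices h : ∀ n : ℕ, (T (Xq^b) Xq (n+1) = Rhs b (n+1)) ∧ (T (Xq^b) Xq (n+2) = Rhs b (n+2)) from
    (h m).1
  intro n
  induction n with
  | zero => exact ⟨base_one b, base_two b⟩
  | succ n ih =>
    refine ⟨ih.2, ?_⟩
    have hT := T_rec (Xq^b) Xq (n+1)
    have hR := Rhs_rec b (n+1) (by omega)
    rw [show n+1+2 = (n+1)+2 from rfl, hT, hR, ih.1,
      show (n+1)+1 = n+2 from rfl, ih.2]
    ring

end Aux

theorem stmt_4 (b k : ℕ) (hk : 1 ≤ k) :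
    T (Xq^b) Xq k =
      (∑ i ∈ Finset.range k,
        Xq^(i*(2*k+1)) / qPoch Xq Xq b * gauss (Xq^2) (b:ℤ) (i:ℤ) *
          ∑ j ∈ Finset.Icc (-((k:ℤ) - i)) ((k:ℤ) - i), (-Xq) ^ (j^2).toNat)
      + ∑ i ∈ Finset.range b,
          qPoch Xq Xq i / qPoch Xq Xq b * Xq^(k*(2*k+2*i+1)) *
            gauss (Xq^2) ((b:ℤ) - i - 1) ((k:ℤ) - 1) := by
  have h := main_all b k hk
  unfold Rhs at h
  exact h
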